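/- Let X_{n,k} denote the number of vertices of degree k (terminal vertices) in a random Apollonian network of index k at time n. Its expectation satisfies E[X_{n+1,k}] = E[X_{n,k}](1 − k/((k-1)n + 1)) + 1, and for all n ≥ 1, |E[X_{n,k}] − (k-1)n/(2k-1)| ≤ 2k²/(2k-1). -/

import Mathlib

theorem terminal_vertex_expectation_bound (k : ℕ) (hk : 3 ≤ k) (a : ℕ → ℝ)
    (h1 : a 1 = 1)
    (hrec : ∀ n : ℕ, 1 ≤ n →
      a (n + 1) = a n * (1 - (k : ℝ) / (((k : ℝ) - 1) * n + 1)) + 1) :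
    ∀ n : ℕ, 1 ≤ n →
      |a n - ((k : ℝ) - 1) * n / (2 * k - 1)| ≤ 2 * (k : ℝ) ^ 2 / (2 * k - 1) := by
  have hK : (3 : ℝ) ≤ (k : ℝ) := by exact_mod_cast hk
  have h2k : (0 : ℝ) < 2 * (k : ℝ) - 1 := by linarith
  intro n hn
  induction n, hn using Nat.le_induction with
  | base =>
    push_cast
    rw [h1]
    have heq : 1 - ((k : ℝ) - 1) * 1 / (2 * (k : ℝ) - 1) = (k : ℝ) / (2 * (k : ℝ) - 1) := by
      field_simp [show (k:ℝ) * 2 - 1 ≠ 0 by linarith]; ring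
    rw [heq, abs_of_nonneg (by positivity)]
    gcongr
    nlinarith
  | succ n hn ih =>
    have hn' : (1 : ℝ) ≤ (n : ℝ) := by exact_mod_cast hn
    set K : ℝ := (k : ℝ)
    have hD : K ≤ (K - 1) * n + 1 := by nlinarith
    have hDpos : (0 : ℝ) < (K - 1) * n + 1 := by linarith
    have key : a (n + 1) - (K - 1) * (↑(n + 1) : ℝ) / (2 * K - 1) =
        (a n - (K - 1) * n / (2 * K - 1)) * (1 - K / ((K - 1) * n + 1))
          + K / ((2 * K - 1) * ((K - 1) * n + 1)) := by
      rw [hrec n hn]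
      push_cast
      field_simp [show K * 2 - 1 ≠ 0 by linarith, hDpos.ne']
      ring
    rw [key]
    have habs : |1 - K / ((K - 1) * n + 1)| = 1 - K / ((K - 1) * n + 1) := by
      rw [abs_of_nonneg]
      have : K / ((K - 1) * n + 1) ≤ 1 := by
        rw [div_le_one hDpos]; exact hD
      linarith
    have hfac : (0 : ℝ) ≤ 1 - K / ((K - 1) * n + 1) := by
      rw [← habs]; exact abs_nonneg _
    have hlast : 0 < K / ((2 * K - 1) * ((K - 1) * n + 1)) :=
      div_pos (by linarith) (mul_pos h2k hDpos)
    calc |(a n - (K - 1) * n / (2 * K - 1)) * (1 - K / ((K - 1) * n + 1))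
          + K / ((2 * K - 1) * ((K - 1) * n + 1))|
        ≤ |(a n - (K - 1) * n / (2 * K - 1)) * (1 - K / ((K - 1) * n + 1))|
          + |K / ((2 * K - 1) * ((K - 1) * n + 1))| := abs_add_le _ _
      _ = |a n - (K - 1) * n / (2 * K - 1)| * (1 - K / ((K - 1) * n + 1))
          + K / ((2 * K - 1) * ((K - 1) * n + 1)) := by
          rw [abs_mul, habs, abs_of_pos hlast]
      _ ≤ (2 * K ^ 2 / (2 * K - 1)) * (1 - K / ((K - 1) * n + 1))
          + K / ((2 * K - 1) * ((K - 1) * n + 1)) := by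
          gcongr
      _ ≤ 2 * K ^ 2 / (2 * K - 1) := by
          have h3 : K / ((2 * K - 1) * ((K - 1) * n + 1)) ≤
              (2 * K ^ 2 / (2 * K - 1)) * (K / ((K - 1) * n + 1)) := by
            rw [div_mul_div_comm]
            rw [div_le_div_iff₀ (by positivity) (by positivity)]
            nlinarith [mul_nonneg (show (0:ℝ) ≤ 2 * K ^ 3 - K by nlinarith)
              (le_of_lt (mul_pos h2k hDpos))]
          have hexp : (2 * K ^ 2 / (2 * K - 1)) * (1 - K / ((K - 1) * n + 1)) =
              2 * K ^ 2 / (2 * K - 1)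
                - (2 * K ^ 2 / (2 * K - 1)) * (K / ((K - 1) * n + 1)) := by ring
          linarith [h3, hexp]
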